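/- Let F be the field with two elements, let S = F[T₁^{±1}, T₂^{±1}, T₃^{±1}] be the Laurent polynomial ring in three variables over F, and let P = T₁T₂T₃ + T₁⁻¹T₂⁻¹T₃ + T₁⁻¹T₂T₃⁻¹ + T₁T₂⁻¹T₃⁻¹ ∈ S. Then S is a free module over the subring F[T₁^{±1}, P] of S generated by T₁, T₁⁻¹ and P; moreover the set G = {T₂^m : m ∈ ℤ} ∪ {T₃^m : m ∈ ℤ} ∪ {T₂ⁿT₃⁻¹ : n ≥ 1} ∪ {T₂⁻ⁿT₃ : n ≥ 1} ∪ {T₂⁻¹T₃ⁿ : n ≥ 1} ∪ {T₂T₃⁻ⁿ : n ≥ 1} ∪ {T₂T₃} is a basis of S as an F[T₁^{±1}, P]-module. -/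

import Mathlib

/-- The field with two elements. -/
abbrev F2 : Type := ZMod 2

/-- The Laurent polynomial ring `F[T₁^{±1}, T₂^{±1}, T₃^{±1}]` in three
variables over the field `F` with two elements, realized as the monoid algebra
on `ℤ × ℤ × ℤ` (the monomial `T₁^a T₂^b T₃^c` corresponds to `(a, b, c)`). -/
abbrev SBN : Type := AddMonoidAlgebra F2 (ℤ × ℤ × ℤ)

/-- The monomial `T₁^a T₂^b T₃^c`. -/
noncomputable def Tmon (k : ℤ × ℤ × ℤ) : SBN := AddMonoidAlgebra.single k 1

/-- `P = T₁T₂T₃ + T₁⁻¹T₂⁻¹T₃ + T₁⁻¹T₂T₃⁻¹ + T₁T₂⁻¹T₃⁻¹`. -/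
noncomputable def Pel : SBN :=
  Tmon (1, 1, 1) + Tmon (-1, -1, 1) + Tmon (-1, 1, -1) + Tmon (1, -1, -1)

/-- The subring `F[T₁^{±1}, P]` of `S` generated by `T₁`, `T₁⁻¹` and `P`
(as an `F`-subalgebra; since `F = {0, 1}`, this coincides with the subring
generated by these elements). -/
noncomputable def FTP : Subalgebra F2 SBN :=
  Algebra.adjoin F2 {Tmon (1, 0, 0), Tmon (-1, 0, 0), Pel}

/-- The set `G = {T₂^m} ∪ {T₃^m} ∪ {T₂ⁿT₃⁻¹ : n ≥ 1} ∪ {T₂⁻ⁿT₃ : n ≥ 1}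
∪ {T₂⁻¹T₃ⁿ : n ≥ 1} ∪ {T₂T₃⁻ⁿ : n ≥ 1} ∪ {T₂T₃}`. -/
def Gset : Set SBN :=
  {x | (∃ m : ℤ, x = Tmon (0, m, 0)) ∨ (∃ m : ℤ, x = Tmon (0, 0, m)) ∨
    (∃ n : ℤ, 1 ≤ n ∧ x = Tmon (0, n, -1)) ∨ (∃ n : ℤ, 1 ≤ n ∧ x = Tmon (0, -n, 1)) ∨
    (∃ n : ℤ, 1 ≤ n ∧ x = Tmon (0, -1, n)) ∨ (∃ n : ℤ, 1 ≤ n ∧ x = Tmon (0, 1, -n)) ∨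
    x = Tmon (0, 1, 1)}

/-- Height function on monomial exponents. -/
def HH (x : ℤ × ℤ × ℤ) : ℕ :=
  3 * (x.2.1.natAbs + x.2.2.natAbs) +
    (if x.2.1 ≤ 0 ∧ x.2.2 ≤ 0 then 2 else if 0 ≤ x.2.1 ∧ 0 ≤ x.2.2 then 1 else 0)

/-- The filtration: elements supported on monomials of height `< n`. -/
noncomputable def VV (n : ℕ) : Submodule F2 SBN where
  carrier := {f | ∀ x ∈ f.coeff.support, HH x < n}
  add_mem' := by
    intro f g hf hg x hx
    rcases Finset.mem_union.1 (Finsupp.support_add hx) with h | h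
    · exact hf x h
    · exact hg x h
  zero_mem' := by intro x hx; simp at hx
  smul_mem' := by
    intro c f hf x hx
    exact hf x (Finsupp.support_smul hx)

lemma mem_VV {n : ℕ} {f : SBN} : f ∈ VV n ↔ ∀ x ∈ f.coeff.support, HH x < n := Iff.rfl

lemma Tmon_mem_VV {n : ℕ} {x : ℤ × ℤ × ℤ} (h : HH x < n) : Tmon x ∈ VV n := by
  intro y hy
  have := Finsupp.support_single_subset hy
  simp at this; subst this; exact h

lemma VV_mono {n m : ℕ} (h : n ≤ m) : VV n ≤ VV m := by
  intro f hf x hx; exact lt_of_lt_of_le (hf x hx) h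

lemma Tmon_mul (k l : ℤ × ℤ × ℤ) : Tmon k * Tmon l = Tmon (k + l) := by
  simp [Tmon, AddMonoidAlgebra.single_mul_single]

lemma Pel_mul_Tmon (a b c : ℤ) :
    Pel * Tmon (a, b, c) = Tmon (a+1, b+1, c+1) + Tmon (a-1, b-1, c+1)
      + Tmon (a-1, b+1, c-1) + Tmon (a+1, b-1, c-1) := by
  simp only [Pel, add_mul, Tmon_mul, Prod.mk_add_mk]
  ring_nf

lemma Pel_support : Pel.coeff.support ⊆ ({(1,1,1), (-1,-1,1), (-1,1,-1), (1,-1,-1)} : Finset (ℤ×ℤ×ℤ)) := by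
  intro x hx
  simp only [Pel] at hx
  rcases Finset.mem_union.1 (Finsupp.support_add hx) with h | h
  · rcases Finset.mem_union.1 (Finsupp.support_add h) with h | h
    · rcases Finset.mem_union.1 (Finsupp.support_add h) with h | h <;>
      · simp only [Tmon] at h
        have := Finsupp.support_single_subset h
        simp at this; simp [this]
    · simp only [Tmon] at h
      have := Finsupp.support_single_subset h
      simp at this; simp [this]
  · simp only [Tmon] at h
    have := Finsupp.support_single_subset h
    simp at this; simp [this]

lemma HH_neighbor (a b c d0 d1 d2 : ℤ) (h1 : d1 = 1 ∨ d1 = -1) (h2 : d2 = 1 ∨ d2 = -1) :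
    HH (a + d0, b + d1, c + d2) ≤ HH (a, b, c) + 6 := by
  simp only [HH]
  split_ifs <;> omega

lemma Pel_mul_mem_VV {n : ℕ} {f : SBN} (hf : f ∈ VV n) : Pel * f ∈ VV (n + 6) := by
  intro x hx
  have hsub := AddMonoidAlgebra.support_coeff_mul_subset Pel f hx
  rw [Finset.mem_add] at hsub
  obtain ⟨p, hp, y, hy, rfl⟩ := hsub
  have hy' := hf y hy
  have hp' := Pel_support hp
  simp only [Finset.mem_insert, Finset.mem_singleton] at hp'
  obtain ⟨a, b, c⟩ := y
  have key : ∀ d0 d1 d2 : ℤ, (d1 = 1 ∨ d1 = -1) → (d2 = 1 ∨ d2 = -1) →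
      HH ((d0, d1, d2) + (a, b, c)) ≤ HH (a, b, c) + 6 := by
    intro d0 d1 d2 h1 h2
    have : ((d0, d1, d2) : ℤ×ℤ×ℤ) + (a, b, c) = (a + d0, b + d1, c + d2) := by
      simp [Prod.ext_iff]
      refine ⟨by ring, by ring, by ring⟩
    rw [this]
    exact HH_neighbor a b c d0 d1 d2 h1 h2
  rcases hp' with rfl | rfl | rfl | rfl
  · exact lt_of_le_of_lt (key 1 1 1 (Or.inl rfl) (Or.inl rfl)) (by omega)
  · exact lt_of_le_of_lt (key (-1) (-1) 1 (Or.inr rfl) (Or.inl rfl)) (by omega)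
  · exact lt_of_le_of_lt (key (-1) 1 (-1) (Or.inl rfl) (Or.inr rfl)) (by omega)
  · exact lt_of_le_of_lt (key 1 (-1) (-1) (Or.inr rfl) (Or.inr rfl)) (by omega)

lemma Pel_pow_mul_mem_VV {n : ℕ} {f : SBN} (hf : f ∈ VV n) (j : ℕ) :
    Pel ^ j * f ∈ VV (n + 6 * j) := by
  induction j with
  | zero => simpa using hf
  | succ j ih =>
      have : Pel ^ (j+1) * f = Pel * (Pel ^ j * f) := by ring
      rw [this]
      have := Pel_mul_mem_VV ih
      exact VV_mono (by omega) this

/-- Position of the leading monomial of `P^j * T^x`. -/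
def tmap (j : ℕ) (x : ℤ × ℤ × ℤ) : ℤ × ℤ × ℤ :=
  if 1 ≤ x.2.1 ∧ x.2.2 ≤ -1 then (x.1 - j, x.2.1 + j, x.2.2 - j)
  else if x.2.1 ≤ -1 ∧ 1 ≤ x.2.2 then (x.1 - j, x.2.1 - j, x.2.2 + j)
  else if x.2.1 ≤ 0 ∧ x.2.2 ≤ 0 then (x.1 + j, x.2.1 - j, x.2.2 - j)
  else (x.1 + j, x.2.1 + j, x.2.2 + j)

lemma chainIV : ∀ (j : ℕ) (a b c : ℤ), 1 ≤ b → c ≤ -1 →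
    ∃ s ∈ VV (HH (a, b, c) + 6 * j),
      Pel ^ j * Tmon (a, b, c) = Tmon (a - j, b + j, c - j) + s := by
  intro j
  induction j with
  | zero => intro a b c _ _; exact ⟨0, zero_mem _, by norm_num⟩
  | succ j ih =>
      intro a b c hb hc
      obtain ⟨s', hs', hEq⟩ := ih (a - 1) (b + 1) (c - 1) (by omega) (by omega)
      set rest : SBN := Tmon (a+1, b+1, c+1) + Tmon (a-1, b-1, c+1) + Tmon (a+1, b-1, c-1)
        with hrest_def
      have hrest : rest ∈ VV (HH (a, b, c) + 6) := by
        refine add_mem (add_mem (Tmon_mem_VV ?_) (Tmon_mem_VV ?_)) (Tmon_mem_VV ?_) <;>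
          (simp only [HH]; split_ifs <;> omega)
      refine ⟨s' + Pel ^ j * rest, ?_, ?_⟩
      · refine add_mem (VV_mono ?_ hs') (VV_mono ?_ (Pel_pow_mul_mem_VV hrest j))
        · have : HH (a - 1, b + 1, c - 1) = HH (a, b, c) + 6 := by
            simp only [HH]; split_ifs <;> omega
          omega
        · omega
      · have h1 : Pel ^ (j+1) * Tmon (a, b, c) = Pel ^ j * (Pel * Tmon (a, b, c)) := by
          rw [pow_succ]; ring
        rw [h1, Pel_mul_Tmon]
        have h2 : (a - ((j:ℤ)+1), b + ((j:ℤ)+1), c - ((j:ℤ)+1))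
            = ((a-1) - (j:ℤ), (b+1) + (j:ℤ), (c-1) - (j:ℤ)) := by
          simp [Prod.ext_iff]; omega
        push_cast
        rw [h2]
        calc Pel ^ j * (Tmon (a+1,b+1,c+1) + Tmon (a-1,b-1,c+1) + Tmon (a-1,b+1,c-1)
              + Tmon (a+1,b-1,c-1))
            = Pel ^ j * Tmon (a-1, b+1, c-1) + Pel ^ j * rest := by rw [hrest_def]; ring
          _ = (Tmon ((a-1) - (j:ℤ), (b+1) + (j:ℤ), (c-1) - (j:ℤ)) + s') + Pel ^ j * rest := by
              rw [hEq]
          _ = Tmon ((a-1) - (j:ℤ), (b+1) + (j:ℤ), (c-1) - (j:ℤ)) + (s' + Pel ^ j * rest) := by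
              ring

lemma chainII : ∀ (j : ℕ) (a b c : ℤ), b ≤ -1 → 1 ≤ c →
    ∃ s ∈ VV (HH (a, b, c) + 6 * j),
      Pel ^ j * Tmon (a, b, c) = Tmon (a - j, b - j, c + j) + s := by
  intro j
  induction j with
  | zero => intro a b c hb hc; exact ⟨0, zero_mem _, by norm_num⟩
  | succ j ih =>
      intro a b c hb hc
      obtain ⟨s', hs', hEq⟩ := ih (a - 1) (b - 1) (c + 1) (by omega) (by omega)
      set rest : SBN := Tmon (a+1, b+1, c+1) + Tmon (a-1, b+1, c-1) + Tmon (a+1, b-1, c-1)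
        with hrest_def
      have hrest : rest ∈ VV (HH (a, b, c) + 6) := by
        refine add_mem (add_mem (Tmon_mem_VV ?_) (Tmon_mem_VV ?_)) (Tmon_mem_VV ?_) <;>
          (simp only [HH]; split_ifs <;> omega)
      refine ⟨s' + Pel ^ j * rest, ?_, ?_⟩
      · refine add_mem (VV_mono ?_ hs') (VV_mono ?_ (Pel_pow_mul_mem_VV hrest j))
        · have : HH (a - 1, b - 1, c + 1) = HH (a, b, c) + 6 := by
            simp only [HH]; split_ifs <;> omega
          omega
        · omega
      · have h1 : Pel ^ (j+1) * Tmon (a, b, c) = Pel ^ j * (Pel * Tmon (a, b, c)) := by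
          rw [pow_succ]; ring
        rw [h1, Pel_mul_Tmon]
        have h2 : (a - ((j:ℤ)+1), b - ((j:ℤ)+1), c + ((j:ℤ)+1))
            = ((a-1) - (j:ℤ), (b-1) - (j:ℤ), (c+1) + (j:ℤ)) := by
          simp [Prod.ext_iff]; omega
        push_cast
        rw [h2]
        calc Pel ^ j * (Tmon (a+1,b+1,c+1) + Tmon (a-1,b-1,c+1) + Tmon (a-1,b+1,c-1)
              + Tmon (a+1,b-1,c-1))
            = Pel ^ j * Tmon (a - 1, b - 1, c + 1) + Pel ^ j * rest := by rw [hrest_def]; ring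
          _ = (Tmon ((a-1) - (j:ℤ), (b-1) - (j:ℤ), (c+1) + (j:ℤ)) + s') + Pel ^ j * rest := by
              rw [hEq]
          _ = Tmon ((a-1) - (j:ℤ), (b-1) - (j:ℤ), (c+1) + (j:ℤ)) + (s' + Pel ^ j * rest) := by
              ring

lemma chainIII0 : ∀ (j : ℕ) (a b c : ℤ), b ≤ 0 → c ≤ 0 →
    ∃ s ∈ VV (HH (a, b, c) + 6 * j),
      Pel ^ j * Tmon (a, b, c) = Tmon (a + j, b - j, c - j) + s := by
  intro j
  induction j with
  | zero => intro a b c hb hc; exact ⟨0, zero_mem _, by norm_num⟩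
  | succ j ih =>
      intro a b c hb hc
      obtain ⟨s', hs', hEq⟩ := ih (a + 1) (b - 1) (c - 1) (by omega) (by omega)
      set rest : SBN := Tmon (a+1, b+1, c+1) + Tmon (a-1, b-1, c+1) + Tmon (a-1, b+1, c-1)
        with hrest_def
      have hrest : rest ∈ VV (HH (a, b, c) + 6) := by
        refine add_mem (add_mem (Tmon_mem_VV ?_) (Tmon_mem_VV ?_)) (Tmon_mem_VV ?_) <;>
          (simp only [HH]; split_ifs <;> omega)
      refine ⟨s' + Pel ^ j * rest, ?_, ?_⟩
      · refine add_mem (VV_mono ?_ hs') (VV_mono ?_ (Pel_pow_mul_mem_VV hrest j))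
        · have : HH (a + 1, b - 1, c - 1) = HH (a, b, c) + 6 := by
            simp only [HH]; split_ifs <;> omega
          omega
        · omega
      · have h1 : Pel ^ (j+1) * Tmon (a, b, c) = Pel ^ j * (Pel * Tmon (a, b, c)) := by
          rw [pow_succ]; ring
        rw [h1, Pel_mul_Tmon]
        have h2 : (a + ((j:ℤ)+1), b - ((j:ℤ)+1), c - ((j:ℤ)+1))
            = ((a+1) + (j:ℤ), (b-1) - (j:ℤ), (c-1) - (j:ℤ)) := by
          simp [Prod.ext_iff]; omega
        push_cast
        rw [h2]
        calc Pel ^ j * (Tmon (a+1,b+1,c+1) + Tmon (a-1,b-1,c+1) + Tmon (a-1,b+1,c-1)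
              + Tmon (a+1,b-1,c-1))
            = Pel ^ j * Tmon (a + 1, b - 1, c - 1) + Pel ^ j * rest := by rw [hrest_def]; ring
          _ = (Tmon ((a+1) + (j:ℤ), (b-1) - (j:ℤ), (c-1) - (j:ℤ)) + s') + Pel ^ j * rest := by
              rw [hEq]
          _ = Tmon ((a+1) + (j:ℤ), (b-1) - (j:ℤ), (c-1) - (j:ℤ)) + (s' + Pel ^ j * rest) := by
              ring

lemma chainI0 : ∀ (j : ℕ) (a b c : ℤ), 0 ≤ b → 0 ≤ c → 1 ≤ b + c →
    ∃ s ∈ VV (HH (a, b, c) + 6 * j),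
      Pel ^ j * Tmon (a, b, c) = Tmon (a + j, b + j, c + j) + s := by
  intro j
  induction j with
  | zero => intro a b c hb hc hbc; exact ⟨0, zero_mem _, by norm_num⟩
  | succ j ih =>
      intro a b c hb hc hbc
      obtain ⟨s', hs', hEq⟩ := ih (a + 1) (b + 1) (c + 1) (by omega) (by omega) (by omega)
      set rest : SBN := Tmon (a-1, b-1, c+1) + Tmon (a-1, b+1, c-1) + Tmon (a+1, b-1, c-1)
        with hrest_def
      have hrest : rest ∈ VV (HH (a, b, c) + 6) := by
        refine add_mem (add_mem (Tmon_mem_VV ?_) (Tmon_mem_VV ?_)) (Tmon_mem_VV ?_) <;>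
          (simp only [HH]; split_ifs <;> omega)
      refine ⟨s' + Pel ^ j * rest, ?_, ?_⟩
      · refine add_mem (VV_mono ?_ hs') (VV_mono ?_ (Pel_pow_mul_mem_VV hrest j))
        · have : HH (a + 1, b + 1, c + 1) = HH (a, b, c) + 6 := by
            simp only [HH]; split_ifs <;> omega
          omega
        · omega
      · have h1 : Pel ^ (j+1) * Tmon (a, b, c) = Pel ^ j * (Pel * Tmon (a, b, c)) := by
          rw [pow_succ]; ring
        rw [h1, Pel_mul_Tmon]
        have h2 : (a + ((j:ℤ)+1), b + ((j:ℤ)+1), c + ((j:ℤ)+1))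
            = ((a+1) + (j:ℤ), (b+1) + (j:ℤ), (c+1) + (j:ℤ)) := by
          simp [Prod.ext_iff]; omega
        push_cast
        rw [h2]
        calc Pel ^ j * (Tmon (a+1,b+1,c+1) + Tmon (a-1,b-1,c+1) + Tmon (a-1,b+1,c-1)
              + Tmon (a+1,b-1,c-1))
            = Pel ^ j * Tmon (a + 1, b + 1, c + 1) + Pel ^ j * rest := by rw [hrest_def]; ring
          _ = (Tmon ((a+1) + (j:ℤ), (b+1) + (j:ℤ), (c+1) + (j:ℤ)) + s') + Pel ^ j * rest := by
              rw [hEq]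
          _ = Tmon ((a+1) + (j:ℤ), (b+1) + (j:ℤ), (c+1) + (j:ℤ)) + (s' + Pel ^ j * rest) := by
              ring

lemma main_expand (j : ℕ) (a b c : ℤ) :
    ∃ s ∈ VV (HH (tmap j (a, b, c))), Pel ^ j * Tmon (a, b, c) = Tmon (tmap j (a, b, c)) + s := by
  by_cases h1 : 1 ≤ b ∧ c ≤ -1
  · have ht : tmap j (a, b, c) = (a - j, b + j, c - j) := by simp [tmap, h1]
    rw [ht]
    obtain ⟨s, hs, he⟩ := chainIV j a b c h1.1 h1.2
    exact ⟨s, VV_mono (le_of_eq (by simp only [HH]; split_ifs <;> omega)) hs, he⟩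
  by_cases h2 : b ≤ -1 ∧ 1 ≤ c
  · have ht : tmap j (a, b, c) = (a - j, b - j, c + j) := by
      simp only [tmap]; rw [if_neg (by simpa using h1), if_pos (by simpa using h2)]
    rw [ht]
    obtain ⟨s, hs, he⟩ := chainII j a b c h2.1 h2.2
    exact ⟨s, VV_mono (le_of_eq (by simp only [HH]; split_ifs <;> omega)) hs, he⟩
  by_cases h3 : b ≤ 0 ∧ c ≤ 0
  · have ht : tmap j (a, b, c) = (a + j, b - j, c - j) := by
      simp only [tmap]
      rw [if_neg (by simpa using h1), if_neg (by simpa using h2), if_pos (by simpa using h3)]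
    rw [ht]
    obtain ⟨s, hs, he⟩ := chainIII0 j a b c h3.1 h3.2
    exact ⟨s, VV_mono (le_of_eq (by simp only [HH]; split_ifs <;> omega)) hs, he⟩
  · have ht : tmap j (a, b, c) = (a + j, b + j, c + j) := by
      simp only [tmap]
      rw [if_neg (by simpa using h1), if_neg (by simpa using h2), if_neg (by simpa using h3)]
    rw [ht]
    obtain ⟨s, hs, he⟩ := chainI0 j a b c (by omega) (by omega) (by omega)
    exact ⟨s, VV_mono (le_of_eq (by simp only [HH]; split_ifs <;> omega)) hs, he⟩

/-- Quantifier-free description of the exponents of elements of `G`. -/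
def GmemZ (b c : ℤ) : Prop :=
  c = 0 ∨ b = 0 ∨ (1 ≤ b ∧ c = -1) ∨ (b ≤ -1 ∧ c = 1) ∨ (b = -1 ∧ 1 ≤ c) ∨
    (b = 1 ∧ c ≤ -1) ∨ (b = 1 ∧ c = 1)

lemma tmap_inj {j j' : ℕ} {a b c a' b' c' : ℤ} (h : GmemZ b c) (h' : GmemZ b' c')
    (e : tmap j (a, b, c) = tmap j' (a', b', c')) :
    a = a' ∧ j = j' ∧ b = b' ∧ c = c' := by
  unfold GmemZ at h h'
  simp only [tmap] at e
  split_ifs at e <;> (simp only [Prod.ext_iff] at e; omega)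

lemma tmap_surj (u p q : ℤ) : ∃ (a : ℤ) (j : ℕ) (b c : ℤ),
    GmemZ b c ∧ tmap j (a, b, c) = (u, p, q) := by
  rcases le_or_gt 0 p with hp | hp <;> rcases le_or_gt 0 q with hq | hq
  · -- p ≥ 0, q ≥ 0
    rcases lt_trichotomy p q with h | h | h
    · exact ⟨u - p, p.toNat, 0, q - p, by unfold GmemZ; omega, by
        simp only [tmap]; split_ifs <;> (first | (exfalso; omega) | (simp only [Prod.ext_iff]; omega))⟩
    · rcases eq_or_lt_of_le hp with h0 | h0
      · exact ⟨u, 0, 0, 0, by unfold GmemZ; omega, by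
          simp only [tmap]; split_ifs <;> (first | (exfalso; omega) | (simp only [Prod.ext_iff]; omega))⟩
      · exact ⟨u - (p - 1), (p - 1).toNat, 1, 1, by unfold GmemZ; omega, by
          simp only [tmap]; split_ifs <;> (first | (exfalso; omega) | (simp only [Prod.ext_iff]; omega))⟩
    · exact ⟨u - q, q.toNat, p - q, 0, by unfold GmemZ; omega, by
        simp only [tmap]; split_ifs <;> (first | (exfalso; omega) | (simp only [Prod.ext_iff]; omega))⟩
  · -- p ≥ 0, q < 0
    rcases le_or_gt 1 p with hp1 | hp1
    · rcases le_or_gt (-q) p with h | h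
      · exact ⟨u - 1 - q, (-1 - q).toNat, p + q + 1, -1, by unfold GmemZ; omega, by
          simp only [tmap]; split_ifs <;> (first | (exfalso; omega) | (simp only [Prod.ext_iff]; omega))⟩
      · exact ⟨u + p - 1, (p - 1).toNat, 1, q + p - 1, by unfold GmemZ; omega, by
          simp only [tmap]; split_ifs <;> (first | (exfalso; omega) | (simp only [Prod.ext_iff]; omega))⟩
    · -- p = 0, q < 0 : region III via b = 0
      exact ⟨u, 0, 0, q, by unfold GmemZ; omega, by
        simp only [tmap]; split_ifs <;> (first | (exfalso; omega) | (simp only [Prod.ext_iff]; omega))⟩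
  · -- p < 0, q ≥ 0
    rcases le_or_gt 1 q with hq1 | hq1
    · rcases le_or_gt q (-p) with h | h
      · exact ⟨u + q - 1, (q - 1).toNat, p + q - 1, 1, by unfold GmemZ; omega, by
          simp only [tmap]; split_ifs <;> (first | (exfalso; omega) | (simp only [Prod.ext_iff]; omega))⟩
      · exact ⟨u - p - 1, (-p - 1).toNat, -1, q + p + 1, by unfold GmemZ; omega, by
          simp only [tmap]; split_ifs <;> (first | (exfalso; omega) | (simp only [Prod.ext_iff]; omega))⟩
    · -- q = 0, p < 0 : region III via c = 0
      exact ⟨u, 0, p, 0, by unfold GmemZ; omega, by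
        simp only [tmap]; split_ifs <;> (first | (exfalso; omega) | (simp only [Prod.ext_iff]; omega))⟩
  · -- p < 0, q < 0
    rcases lt_trichotomy p q with h | h | h
    · exact ⟨u + q, (-q).toNat, p - q, 0, by unfold GmemZ; omega, by
        simp only [tmap]; split_ifs <;> (first | (exfalso; omega) | (simp only [Prod.ext_iff]; omega))⟩
    · exact ⟨u + p, (-p).toNat, 0, 0, by unfold GmemZ; omega, by
        simp only [tmap]; split_ifs <;> (first | (exfalso; omega) | (simp only [Prod.ext_iff]; omega))⟩
    · exact ⟨u + p, (-p).toNat, 0, q - p, by unfold GmemZ; omega, by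
        simp only [tmap]; split_ifs <;> (first | (exfalso; omega) | (simp only [Prod.ext_iff]; omega))⟩


lemma Tmon_injective : Function.Injective Tmon := by
  intro k l h
  have := AddMonoidAlgebra.single_left_injective (R := F2) (M := ℤ×ℤ×ℤ) one_ne_zero h
  exact this

lemma F2_cases (v : F2) : v = 0 ∨ v = 1 := by revert v; decide

lemma mem_Gset_iff {x : SBN} : x ∈ Gset ↔ ∃ b c : ℤ, GmemZ b c ∧ x = Tmon (0, b, c) := by
  constructor
  · rintro (⟨m, rfl⟩ | ⟨m, rfl⟩ | ⟨n, hn, rfl⟩ | ⟨n, hn, rfl⟩ | ⟨n, hn, rfl⟩ | ⟨n, hn, rfl⟩ | rfl)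
    · exact ⟨m, 0, by unfold GmemZ; omega, rfl⟩
    · exact ⟨0, m, by unfold GmemZ; omega, rfl⟩
    · exact ⟨n, -1, by unfold GmemZ; omega, rfl⟩
    · exact ⟨-n, 1, by unfold GmemZ; omega, rfl⟩
    · exact ⟨-1, n, by unfold GmemZ; omega, rfl⟩
    · exact ⟨1, -n, by unfold GmemZ; omega, rfl⟩
    · exact ⟨1, 1, by unfold GmemZ; omega, rfl⟩
  · rintro ⟨b, c, hm, rfl⟩
    unfold GmemZ at hm
    rcases hm with h | h | h | h | h | h | h
    · exact Or.inl ⟨b, by rw [h]⟩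
    · exact Or.inr (Or.inl ⟨c, by rw [h]⟩)
    · exact Or.inr (Or.inr (Or.inl ⟨b, h.1, by rw [h.2]⟩))
    · exact Or.inr (Or.inr (Or.inr (Or.inl ⟨-b, by omega, by rw [show -(-b) = b by ring, h.2]⟩)))
    · exact Or.inr (Or.inr (Or.inr (Or.inr (Or.inl ⟨c, h.2, by rw [h.1]⟩))))
    · exact Or.inr (Or.inr (Or.inr (Or.inr (Or.inr (Or.inl
        ⟨-c, by omega, by rw [h.1, show -(-c) = c by ring]⟩)))))
    · exact Or.inr (Or.inr (Or.inr (Or.inr (Or.inr (Or.inr (by rw [h.1, h.2]))))))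

noncomputable def gexp (g : ↥Gset) : ℤ × ℤ :=
  ((mem_Gset_iff.1 g.2).choose, (mem_Gset_iff.1 g.2).choose_spec.choose)

lemma gexp_spec (g : ↥Gset) :
    GmemZ (gexp g).1 (gexp g).2 ∧ (g : SBN) = Tmon (0, (gexp g).1, (gexp g).2) :=
  (mem_Gset_iff.1 g.2).choose_spec.choose_spec

lemma gexp_eq {b c : ℤ} (h : GmemZ b c) {g : ↥Gset} (hg : (g : SBN) = Tmon (0, b, c)) :
    gexp g = (b, c) := by
  have hs := gexp_spec g
  have := Tmon_injective (hs.2.symm.trans hg)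
  simp only [Prod.ext_iff] at this ⊢
  exact ⟨this.2.1, this.2.2⟩

/-- The index family: `(a, j, g) ↦ T₁^a P^j g`. -/
noncomputable def βf (i : ℤ × ℕ × ↥Gset) : SBN :=
  Tmon (i.1, 0, 0) * Pel ^ i.2.1 * (i.2.2 : SBN)

/-- Leading monomial exponent of `βf i`. -/
noncomputable def θmap (i : ℤ × ℕ × ↥Gset) : ℤ × ℤ × ℤ :=
  tmap i.2.1 (i.1, (gexp i.2.2).1, (gexp i.2.2).2)

lemma βf_eq (i : ℤ × ℕ × ↥Gset) :
    βf i = Pel ^ i.2.1 * Tmon (i.1, (gexp i.2.2).1, (gexp i.2.2).2) := by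
  obtain ⟨a, j, g⟩ := i
  have hs := (gexp_spec g).2
  simp only [βf, θmap]
  rw [hs]
  have : Tmon (a, 0, 0) * Tmon (0, (gexp g).1, (gexp g).2)
      = Tmon (a, (gexp g).1, (gexp g).2) := by
    rw [Tmon_mul]
    congr 1; ext <;> simp
  rw [mul_comm (Tmon (a,0,0)) (Pel ^ j), mul_assoc, this]

lemma βf_expand (i : ℤ × ℕ × ↥Gset) :
    ∃ s ∈ VV (HH (θmap i)), βf i = Tmon (θmap i) + s := by
  rw [βf_eq]
  exact main_expand _ _ _ _

lemma θmap_inj : Function.Injective θmap := by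
  rintro ⟨a, j, g⟩ ⟨a', j', g'⟩ h
  simp only [θmap] at h
  obtain ⟨h1, h2, h3, h4⟩ := tmap_inj (gexp_spec g).1 (gexp_spec g').1 h
  have hg : (g : SBN) = (g' : SBN) := by
    rw [(gexp_spec g).2, (gexp_spec g').2, h3, h4]
  simp only [Prod.ext_iff]
  exact ⟨h1, h2, Subtype.ext hg⟩

lemma θmap_surj (x : ℤ × ℤ × ℤ) : ∃ i, θmap i = x := by
  obtain ⟨u, p, q⟩ := x
  obtain ⟨a, j, b, c, hm, he⟩ := tmap_surj u p q
  have hGmem : Tmon (0, b, c) ∈ Gset := mem_Gset_iff.2 ⟨b, c, hm, rfl⟩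
  refine ⟨(a, j, ⟨Tmon (0, b, c), hGmem⟩), ?_⟩
  simp only [θmap]
  rw [gexp_eq hm rfl]
  exact he

noncomputable def coeffL (x : ℤ × ℤ × ℤ) : SBN →ₗ[F2] F2 :=
  Finsupp.lapply x ∘ₗ (AddMonoidAlgebra.coeffLinearEquiv F2).toLinearMap

lemma coeffL_apply (x : ℤ × ℤ × ℤ) (f : SBN) : coeffL x f = f.coeff x := rfl

lemma coeffL_Tmon (x y : ℤ × ℤ × ℤ) : coeffL x (Tmon y) = if y = x then 1 else 0 := by
  rw [coeffL_apply, Tmon]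
  exact Finsupp.single_apply

lemma coeffL_of_mem_VV {n : ℕ} {f : SBN} (hf : f ∈ VV n) {x : ℤ × ℤ × ℤ} (hx : n ≤ HH x) :
    coeffL x f = 0 := by
  rw [coeffL_apply]
  by_contra h
  exact absurd (hf x (Finsupp.mem_support_iff.2 h)) (by omega)

lemma VV_le_span {n : ℕ} {W : Submodule F2 SBN} (h : ∀ y, HH y < n → Tmon y ∈ W) :
    VV n ≤ W := by
  intro f hf
  rw [← AddMonoidAlgebra.sum_coeff_single f]
  apply Submodule.sum_mem
  intro y hy
  rcases F2_cases (f.coeff y) with h0 | h1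
  · rw [h0]
    simp only [AddMonoidAlgebra.single_zero]
    exact zero_mem W
  · rw [h1]
    exact h y (hf y hy)

lemma βf_span : Submodule.span F2 (Set.range βf) = ⊤ := by
  have key : ∀ n (x : ℤ × ℤ × ℤ), HH x < n → Tmon x ∈ Submodule.span F2 (Set.range βf) := by
    intro n
    induction n with
    | zero => intro x h; omega
    | succ n ih =>
        intro x hx
        obtain ⟨i, hi⟩ := θmap_surj x
        obtain ⟨s, hs, he⟩ := βf_expand i
        rw [hi] at hs he
        have hsp : s ∈ Submodule.span F2 (Set.range βf) :=
          VV_le_span (fun y hy => ih y (by omega)) hs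
        have : Tmon x = βf i - s := by rw [he]; ring
        rw [this]
        exact sub_mem (Submodule.subset_span ⟨i, rfl⟩) hsp
  rw [eq_top_iff]
  intro f _
  have hf : f ∈ VV ((f.coeff.support.sup HH) + 1) := by
    intro y hy
    exact Nat.lt_succ_of_le (Finset.le_sup hy)
  exact VV_le_span (fun y hy => key _ y hy) hf

lemma βf_indep : LinearIndependent F2 βf := by
  classical
  rw [linearIndependent_iff]
  intro l hl
  by_contra hne
  obtain ⟨i₀, hi₀, hmax⟩ := Finset.exists_max_image l.support (fun i => HH (θmap i))
    (Finsupp.support_nonempty_iff.2 hne)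
  have hval : coeffL (θmap i₀) (Finsupp.linearCombination F2 βf l) = 0 := by
    rw [hl]; exact map_zero _
  rw [Finsupp.linearCombination_apply, map_finsuppSum] at hval
  have hterm : ∀ i ∈ l.support, l i • coeffL (θmap i₀) (βf i)
      = if i = i₀ then l i₀ else 0 := by
    intro i hi
    obtain ⟨s, hs, he⟩ := βf_expand i
    rw [he, map_add, coeffL_Tmon]
    have hserr : coeffL (θmap i₀) s = 0 :=
      coeffL_of_mem_VV hs (hmax i hi)
    by_cases hii : i = i₀
    · subst hii
      simp [hserr]
    · have hne2 : θmap i ≠ θmap i₀ := fun hc => hii (θmap_inj hc)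
      simp [hserr, hii, hne2]
  have : (l.sum fun i a => a • coeffL (θmap i₀) (βf i)) = l i₀ := by
    rw [Finsupp.sum]
    rw [Finset.sum_congr rfl hterm]
    refine (Finset.sum_eq_single i₀ (fun b _ hb => if_neg hb) (fun h => absurd hi₀ h)).trans ?_
    exact if_pos rfl
  rw [show (l.sum fun i a => coeffL (θmap i₀) (a • βf i))
      = (l.sum fun i a => a • coeffL (θmap i₀) (βf i)) from
    Finsupp.sum_congr (fun i _ => by rw [map_smul])] at hval
  rw [this] at hval
  exact (Finsupp.mem_support_iff.1 hi₀) hval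

noncomputable def μfun (p : ℤ × ℕ) : SBN := Tmon (p.1, 0, 0) * Pel ^ p.2

lemma Tmon_zero_one : Tmon (0, 0, 0) = (1 : SBN) := rfl
lemma Tmon_zero : Tmon 0 = (1 : SBN) := rfl

lemma Tmon_fst_mem (a : ℤ) : Tmon (a, 0, 0) ∈ FTP := by
  have h1 : Tmon (1, 0, 0) ∈ FTP := Algebra.subset_adjoin (by simp)
  have h2 : Tmon (-1, 0, 0) ∈ FTP := Algebra.subset_adjoin (by simp)
  induction a using Int.induction_on with
  | zero => rw [Tmon_zero_one]; exact one_mem _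
  | succ n ih =>
      have : Tmon ((n:ℤ)+1, 0, 0) = Tmon (n, 0, 0) * Tmon (1, 0, 0) := by
        rw [Tmon_mul]; norm_num
      rw [this]; exact mul_mem ih h1
  | pred n ih =>
      have : Tmon (-(n:ℤ)-1, 0, 0) = Tmon (-n, 0, 0) * Tmon (-1, 0, 0) := by
        rw [Tmon_mul]
        exact congrArg Tmon (by simp [Prod.ext_iff]; omega)
      rw [this]; exact mul_mem ih h2

lemma Pel_mem : Pel ∈ FTP := Algebra.subset_adjoin (by simp)

lemma μfun_mem (p : ℤ × ℕ) : μfun p ∈ FTP := mul_mem (Tmon_fst_mem p.1) (pow_mem Pel_mem p.2)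

lemma μfun_mul (p q : ℤ × ℕ) : μfun p * μfun q = μfun (p.1 + q.1, p.2 + q.2) := by
  simp only [μfun]
  have h : Tmon (p.1, 0, 0) * Tmon (q.1, 0, 0) = Tmon (p.1 + q.1, 0, 0) := by
    rw [Tmon_mul]; norm_num
  calc Tmon (p.1,0,0) * Pel ^ p.2 * (Tmon (q.1,0,0) * Pel ^ q.2)
      = (Tmon (p.1,0,0) * Tmon (q.1,0,0)) * (Pel ^ p.2 * Pel ^ q.2) := by ring
    _ = Tmon (p.1 + q.1, 0, 0) * Pel ^ (p.2 + q.2) := by rw [h, pow_add]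

lemma W_mul {x y : SBN} (hx : x ∈ Submodule.span F2 (Set.range μfun))
    (hy : y ∈ Submodule.span F2 (Set.range μfun)) :
    x * y ∈ Submodule.span F2 (Set.range μfun) := by
  induction hx using Submodule.span_induction with
  | mem x hxm =>
      induction hy using Submodule.span_induction with
      | mem y hym =>
          obtain ⟨p, rfl⟩ := hxm
          obtain ⟨q, rfl⟩ := hym
          rw [μfun_mul]
          exact Submodule.subset_span ⟨_, rfl⟩
      | zero => rw [mul_zero]; exact zero_mem _
      | add y z _ _ hy hz => rw [mul_add]; exact add_mem hy hz
      | smul r y _ hy => rw [mul_smul_comm]; exact Submodule.smul_mem _ r hy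
  | zero => rw [zero_mul]; exact zero_mem _
  | add x z _ _ hx' hz' => rw [add_mul]; exact add_mem hx' hz'
  | smul r x _ hx' => rw [smul_mul_assoc]; exact Submodule.smul_mem _ r hx'

lemma FTP_le_span : ∀ x ∈ FTP, x ∈ Submodule.span F2 (Set.range μfun) := by
  intro x hx
  induction hx using Algebra.adjoin_induction with
  | mem y hy =>
      rcases hy with rfl | rfl | rfl
      · exact Submodule.subset_span ⟨(1, 0), by simp [μfun]⟩
      · exact Submodule.subset_span ⟨(-1, 0), by simp [μfun]⟩
      · exact Submodule.subset_span ⟨(0, 1), by simp [μfun, Tmon_zero, Tmon_zero_one]⟩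
  | algebraMap r =>
      have h1 : (algebraMap F2 SBN) r = r • (1 : SBN) := Algebra.algebraMap_eq_smul_one r
      rw [h1]
      refine Submodule.smul_mem _ r (Submodule.subset_span ⟨(0, 0), ?_⟩)
      simp [μfun, Tmon_zero, Tmon_zero_one]
  | add y z _ _ hy hz => exact add_mem hy hz
  | mul y z _ _ hy hz => exact W_mul hy hz

lemma FTP_smul_def (r : ↥FTP) (x : SBN) : r • x = (r : SBN) * x := rfl

lemma Gspan : ⊤ ≤ Submodule.span ↥FTP (Set.range (fun g : ↥Gset => (g : SBN))) := by
  intro x _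
  have hx : x ∈ Submodule.span F2 (Set.range βf) := by rw [βf_span]; trivial
  have hle : Submodule.span F2 (Set.range βf) ≤
      (Submodule.span ↥FTP (Set.range (fun g : ↥Gset => (g : SBN)))).restrictScalars F2 := by
    rw [Submodule.span_le]
    rintro _ ⟨⟨a, j, g⟩, rfl⟩
    show βf (a, j, g) ∈ Submodule.span ↥FTP (Set.range (fun g : ↥Gset => (g : SBN)))
    have hμ : Tmon (a, 0, 0) * Pel ^ j ∈ FTP := μfun_mem (a, j)
    have : βf (a, j, g) = (⟨Tmon (a, 0, 0) * Pel ^ j, hμ⟩ : ↥FTP) • (g : SBN) := by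
      rw [FTP_smul_def, βf]
    rw [this]
    exact Submodule.smul_mem _ _ (Submodule.subset_span ⟨g, rfl⟩)
  exact hle hx

lemma Gindep : LinearIndependent ↥FTP (fun g : ↥Gset => (g : SBN)) := by
  classical
  rw [linearIndependent_iff]
  intro l hl
  have hex : ∀ g : ↥Gset, ∃ c : (ℤ × ℕ) →₀ F2,
      (c.sum fun p a => a • μfun p) = ((l g : SBN)) := fun g =>
    Finsupp.mem_span_range_iff_exists_finsupp.1 (FTP_le_span _ (l g).2)
  choose cf hcf using hex
  have embinj : ∀ g : ↥Gset, Function.Injective (fun p : ℤ × ℕ => (p.1, p.2, g)) := by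
    intro g p q h
    simp only [Prod.ext_iff] at h
    exact Prod.ext h.1 h.2.1
  set C : (ℤ × ℕ × ↥Gset) →₀ F2 :=
    ∑ g ∈ l.support, Finsupp.embDomain ⟨fun p : ℤ × ℕ => (p.1, p.2, g), embinj g⟩ (cf g)
    with hC_def
  have hCtot : Finsupp.linearCombination F2 βf C = 0 := by
    rw [hC_def, map_sum]
    have hterm : ∀ g ∈ l.support,
        Finsupp.linearCombination F2 βf
          (Finsupp.embDomain ⟨fun p : ℤ × ℕ => (p.1, p.2, g), embinj g⟩ (cf g))
        = l g • (g : SBN) := by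
      intro g _
      rw [Finsupp.linearCombination_embDomain]
      rw [Finsupp.linearCombination_apply]
      calc ((cf g).sum fun p a => a • (βf ∘ (fun p : ℤ × ℕ => (p.1, p.2, g))) p)
          = ((cf g).sum fun p a => (a • μfun p) * (g : SBN)) := by
            apply Finsupp.sum_congr
            intro p _
            exact (smul_mul_assoc _ _ _).symm
        _ = ((cf g).sum fun p a => a • μfun p) * (g : SBN) := by
            rw [Finsupp.sum, Finsupp.sum, Finset.sum_mul]
        _ = (l g : SBN) * (g : SBN) := by rw [hcf g]
        _ = l g • (g : SBN) := (FTP_smul_def _ _).symm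
    rw [Finset.sum_congr rfl hterm]
    rw [Finsupp.linearCombination_apply, Finsupp.sum] at hl
    exact hl
  have hC0 : C = 0 := linearIndependent_iff.1 βf_indep C hCtot
  have hcg0 : ∀ g ∈ l.support, cf g = 0 := by
    intro g hg
    ext p
    have h1 : C (p.1, p.2, g) = cf g p := by
      rw [hC_def, Finset.sum_apply']
      rw [Finset.sum_eq_single g]
      · exact Finsupp.embDomain_apply_self _ _ p
      · intro g' _ hgg'
        apply Finsupp.embDomain_notin_range
        rintro ⟨q, hq⟩
        simp only [Prod.ext_iff] at hq
        exact hgg' hq.2.2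
      · intro hgns; exact absurd hg hgns
    rw [hC0] at h1
    simpa using h1.symm
  have hlg0 : ∀ g ∈ l.support, l g = 0 := by
    intro g hg
    have := hcf g
    rw [hcg0 g hg] at this
    simp only [Finsupp.sum_zero_index] at this
    exact Subtype.ext this.symm
  apply Finsupp.ext
  intro g
  rw [Finsupp.zero_apply]
  by_cases hg : g ∈ l.support
  · exact hlg0 g hg
  · exact Finsupp.notMem_support_iff.1 hg

noncomputable def Gbasis : Module.Basis ↥Gset ↥FTP SBN := Module.Basis.mk Gindep Gspan

/-- **Statement 12.** `S = F[T₁^{±1}, T₂^{±1}, T₃^{±1}]` is a free module over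
its subring `F[T₁^{±1}, P]`, and the set `G` is a basis. -/
theorem statement12 :
    Module.Free ↥FTP SBN ∧
    ∃ b : Module.Basis ↥Gset ↥FTP SBN, ∀ g : ↥Gset, b g = (g : SBN) := by
  exact ⟨Module.Free.of_basis Gbasis, ⟨Gbasis, fun g => Module.Basis.mk_apply Gindep Gspan g⟩⟩
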